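/- Let d ∈ ℕ, μ ∈ ℝ^d and let V be a d×d real symmetric positive definite matrix. Then for every c ∈ (0, 1/(4‖V‖)] one has ∫_{ℝ^d} e^{c‖x‖²} φ_d(x; μ, V) dx ≤ (2‖V‖)^{d/2} · det(V)^{−1/2} · exp(2c‖μ‖²). -/

import Mathlib

open MeasureTheory Matrix

/-- The Euclidean norm on `ℝ^n`. -/
noncomputable def euclNorm {n : ℕ} (x : Fin n → ℝ) : ℝ := Real.sqrt (∑ i, (x i) ^ 2)

/-- The density of the `n`-dimensional Gaussian distribution with mean `m` and
(symmetric positive definite) covariance matrix `V`, with respect to Lebesgue measure. -/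
noncomputable def gaussDensity {n : ℕ} (m : Fin n → ℝ) (V : Matrix (Fin n) (Fin n) ℝ)
    (x : Fin n → ℝ) : ℝ :=
  ((2 * Real.pi) ^ n * V.det) ^ (-(1 : ℝ) / 2) *
    Real.exp (-((x - m) ⬝ᵥ (V⁻¹ *ᵥ (x - m))) / 2)

/-- The operator (spectral) norm of a matrix, viewed as a linear map between
Euclidean spaces. -/
noncomputable def matOpNorm {n : ℕ} (V : Matrix (Fin n) (Fin n) ℝ) : ℝ :=
  ‖Matrix.toEuclideanCLM (𝕜 := ℝ) V‖

section auxlemmas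
variable {d : ℕ} {V : Matrix (Fin d) (Fin d) ℝ}

lemma euclNorm_eq_norm (x : Fin d → ℝ) :
    euclNorm x = ‖(WithLp.equiv 2 (Fin d → ℝ)).symm x‖ := by
  rw [EuclideanSpace.norm_eq, euclNorm]
  congr 1
  refine Finset.sum_congr rfl fun i _ => ?_
  rw [WithLp.equiv_symm_apply, WithLp.ofLp_toLp, Real.norm_eq_abs, sq_abs]

lemma euclNorm_nonneg (x : Fin d → ℝ) : 0 ≤ euclNorm x := Real.sqrt_nonneg _

lemma euclNorm_sq' (x : Fin d → ℝ) : euclNorm x ^ 2 = ∑ i, (x i) ^ 2 :=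
  Real.sq_sqrt (Finset.sum_nonneg fun i _ => sq_nonneg _)

lemma euclNorm_sq (x : Fin d → ℝ) : euclNorm x ^ 2 = x ⬝ᵥ x := by
  rw [euclNorm, Real.sq_sqrt (Finset.sum_nonneg fun i _ => sq_nonneg _)]
  simp [dotProduct, pow_two]

lemma euclNorm_mulVec_le (V : Matrix (Fin d) (Fin d) ℝ) (x : Fin d → ℝ) :
    euclNorm (V *ᵥ x) ≤ matOpNorm V * euclNorm x := by
  rw [euclNorm_eq_norm, euclNorm_eq_norm]
  have h := (Matrix.toEuclideanCLM (𝕜 := ℝ) V).le_opNorm ((WithLp.equiv 2 (Fin d → ℝ)).symm x)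
  simp only [WithLp.equiv_symm_apply, Matrix.toEuclideanCLM_toLp] at h ⊢
  exact h

lemma dot_le_euclNorm (x y : Fin d → ℝ) : x ⬝ᵥ y ≤ euclNorm x * euclNorm y := by
  rw [euclNorm_eq_norm, euclNorm_eq_norm]
  have h := real_inner_le_norm ((WithLp.equiv 2 (Fin d → ℝ)).symm x)
    ((WithLp.equiv 2 (Fin d → ℝ)).symm y)
  rwa [show (inner ℝ ((WithLp.equiv 2 (Fin d → ℝ)).symm x) ((WithLp.equiv 2 (Fin d → ℝ)).symm y) : ℝ)
    = x ⬝ᵥ y from by simp [PiLp.inner_apply, dotProduct, WithLp.equiv_symm_apply, mul_comm]] at h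

lemma euclNorm_triangle (x y : Fin d → ℝ) :
    euclNorm (x + y) ≤ euclNorm x + euclNorm y := by
  simp only [euclNorm_eq_norm]
  rw [show (WithLp.equiv 2 (Fin d → ℝ)).symm (x + y)
    = (WithLp.equiv 2 (Fin d → ℝ)).symm x + (WithLp.equiv 2 (Fin d → ℝ)).symm y from rfl]
  exact norm_add_le _ _

lemma euclNorm_smul (r : ℝ) (x : Fin d → ℝ) : euclNorm (r • x) = |r| * euclNorm x := by
  simp only [euclNorm_eq_norm]
  rw [show (WithLp.equiv 2 (Fin d → ℝ)).symm (r • x)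
    = r • (WithLp.equiv 2 (Fin d → ℝ)).symm x from rfl]
  rw [norm_smul, Real.norm_eq_abs]

lemma euclNorm_pos (x : Fin d → ℝ) (hx : x ≠ 0) : 0 < euclNorm x := by
  rw [euclNorm_eq_norm]
  rw [norm_pos_iff]
  intro h
  apply hx
  have := congrArg (WithLp.equiv 2 (Fin d → ℝ)) h
  simpa using this

lemma dot_symm (hV : V.IsHermitian) (x y : Fin d → ℝ) :
    x ⬝ᵥ (V *ᵥ y) = y ⬝ᵥ (V *ᵥ x) := by
  have hVt : Vᵀ = V := by
    have := hV.eq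
    rwa [Matrix.conjTranspose_eq_transpose_of_trivial] at this
  rw [Matrix.dotProduct_mulVec, ← Matrix.vecMul_transpose, hVt, dotProduct_comm]

lemma form_nonneg (hV : V.PosDef) (x : Fin d → ℝ) : 0 ≤ x ⬝ᵥ (V *ᵥ x) := by
  simpa using hV.posSemidef.dotProduct_mulVec_nonneg x

lemma form_le (hV : V.PosDef) (x : Fin d → ℝ) :
    x ⬝ᵥ (V *ᵥ x) ≤ matOpNorm V * euclNorm x ^ 2 := by
  calc x ⬝ᵥ (V *ᵥ x) ≤ euclNorm x * euclNorm (V *ᵥ x) := dot_le_euclNorm _ _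
    _ ≤ euclNorm x * (matOpNorm V * euclNorm x) :=
        mul_le_mul_of_nonneg_left (euclNorm_mulVec_le V x) (euclNorm_nonneg x)
    _ = matOpNorm V * euclNorm x ^ 2 := by ring

lemma form_cs (hV : V.PosDef) (u w : Fin d → ℝ) :
    (u ⬝ᵥ (V *ᵥ w)) ^ 2 ≤ (u ⬝ᵥ (V *ᵥ u)) * (w ⬝ᵥ (V *ᵥ w)) := by
  have key : ∀ t : ℝ, 0 ≤ (w ⬝ᵥ (V *ᵥ w)) * (t * t) + (2 * (u ⬝ᵥ (V *ᵥ w))) * t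
      + u ⬝ᵥ (V *ᵥ u) := by
    intro t
    have h := form_nonneg hV (u + t • w)
    have expand : (u + t • w) ⬝ᵥ (V *ᵥ (u + t • w)) =
        (w ⬝ᵥ (V *ᵥ w)) * (t * t) + (2 * (u ⬝ᵥ (V *ᵥ w))) * t + u ⬝ᵥ (V *ᵥ u) := by
      rw [Matrix.mulVec_add, Matrix.mulVec_smul]
      rw [add_dotProduct, smul_dotProduct, dotProduct_add,
        dotProduct_add, dotProduct_smul, dotProduct_smul,]
      simp only [smul_eq_mul]
      rw [dot_symm hV.isHermitian w u]
      ring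
    rw [expand] at h; exact h
  have hd := discrim_le_zero key
  rw [discrim] at hd
  nlinarith [hd]

lemma inv_form_ge (hV : V.PosDef) (z : Fin d → ℝ) :
    euclNorm z ^ 2 ≤ matOpNorm V * (z ⬝ᵥ (V⁻¹ *ᵥ z)) := by
  have hz : V *ᵥ (V⁻¹ *ᵥ z) = z := by
    rw [Matrix.mulVec_mulVec, Matrix.mul_nonsing_inv V hV.det_pos.ne'.isUnit, Matrix.one_mulVec]
  have h1 : z ⬝ᵥ (V⁻¹ *ᵥ z) = (V⁻¹ *ᵥ z) ⬝ᵥ (V *ᵥ (V⁻¹ *ᵥ z)) := by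
    rw [hz, dotProduct_comm]
  rw [h1]
  have hcs := form_cs hV (V *ᵥ (V⁻¹ *ᵥ z)) (V⁻¹ *ᵥ z)
  have h3 := form_le hV (V *ᵥ (V⁻¹ *ᵥ z))
  rw [hz] at hcs h3 ⊢
  rw [euclNorm_sq z] at h3 ⊢
  have hnn := form_nonneg hV (V⁻¹ *ᵥ z)
  rw [hz] at hnn
  have hs : 0 ≤ z ⬝ᵥ z := euclNorm_sq z ▸ sq_nonneg (euclNorm z)
  have ha : 0 ≤ matOpNorm V := norm_nonneg _
  rcases eq_or_lt_of_le hs with h0 | h0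
  · rw [← h0]; exact mul_nonneg ha hnn
  · have h4 := le_trans hcs (mul_le_mul_of_nonneg_right h3 hnn)
    nlinarith [h4, h0]

lemma matOpNorm_pos (hd : 0 < d) (hV : V.PosDef) : 0 < matOpNorm V := by
  set z : Fin d → ℝ := Pi.single ⟨0, hd⟩ 1 with hz
  have hz0 : z ≠ 0 := by
    intro h
    have := congrFun h ⟨0, hd⟩
    simp [hz] at this
  have h1 : 0 < z ⬝ᵥ (V *ᵥ z) := by simpa using hV.dotProduct_mulVec_pos hz0
  have h2 := form_le hV z
  nlinarith [sq_nonneg (euclNorm z), h1, h2]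

lemma M_posdef (hV : V.PosDef) {c : ℝ} (hc : 0 < c)
    (hca : 4 * c * matOpNorm V ≤ 1) : (1 - (2*c) • V).PosDef := by
  refine Matrix.PosDef.of_dotProduct_mulVec_pos ?_ ?_
  · unfold Matrix.IsHermitian
    rw [Matrix.conjTranspose_sub, Matrix.conjTranspose_smul, Matrix.conjTranspose_one,
      hV.1.eq]
    simp
  · intro x hx
    have hform : x ⬝ᵥ ((1 - (2*c) • V) *ᵥ x) = x ⬝ᵥ x - 2*c*(x ⬝ᵥ (V *ᵥ x)) := by
      rw [Matrix.sub_mulVec, dotProduct_sub, Matrix.one_mulVec,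
        Matrix.smul_mulVec, dotProduct_smul, smul_eq_mul]
    have h2 := form_le hV x
    have h3 : 0 < euclNorm x := euclNorm_pos x hx
    have h4 := euclNorm_sq x
    have ha : 0 ≤ matOpNorm V := norm_nonneg _
    simp only [star_trivial]
    rw [hform]
    nlinarith [h2, h3, h4, sq_nonneg (euclNorm x)]

end auxlemmas

/-- The center of the completed square. -/
noncomputable def mCtr {d : ℕ} (V : Matrix (Fin d) (Fin d) ℝ) (c : ℝ) (μ : Fin d → ℝ) :
    Fin d → ℝ :=
  (1 - (2*c) • V)⁻¹ *ᵥ μ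

section center
variable {d : ℕ} {V : Matrix (Fin d) (Fin d) ℝ}

lemma mCtr_spec (hV : V.PosDef) {c : ℝ} (hc : 0 < c) (hca : 4 * c * matOpNorm V ≤ 1)
    (μ : Fin d → ℝ) :
    mCtr V c μ - (2*c) • (V *ᵥ mCtr V c μ) = μ := by
  have hMd : IsUnit (1 - (2*c) • V).det := (M_posdef hV hc hca).det_pos.ne'.isUnit
  have h : (1 - (2*c) • V) *ᵥ mCtr V c μ = μ := by
    rw [mCtr, Matrix.mulVec_mulVec, Matrix.mul_nonsing_inv _ hMd, Matrix.one_mulVec]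
  rw [Matrix.sub_mulVec, Matrix.one_mulVec, Matrix.smul_mulVec] at h
  exact h

lemma mCtr_norm_le (hd : 0 < d) (hV : V.PosDef) {c : ℝ} (hc : 0 < c)
    (hca : 4 * c * matOpNorm V ≤ 1) (μ : Fin d → ℝ) :
    euclNorm (mCtr V c μ) ≤ 2 * euclNorm μ := by
  have hspec := mCtr_spec hV hc hca μ
  set m := mCtr V c μ
  have h1 : m = μ + (2*c) • (V *ᵥ m) := by rw [← hspec]; abel
  have h2 : euclNorm m ≤ euclNorm μ + (2*c) * (matOpNorm V * euclNorm m) := by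
    calc euclNorm m = euclNorm (μ + (2*c) • (V *ᵥ m)) := by rw [← h1]
      _ ≤ euclNorm μ + euclNorm ((2*c) • (V *ᵥ m)) := euclNorm_triangle _ _
      _ ≤ euclNorm μ + (2*c) * (matOpNorm V * euclNorm m) := by
          rw [euclNorm_smul, abs_of_pos (by linarith)]
          exact add_le_add_right (mul_le_mul_of_nonneg_left
            (euclNorm_mulVec_le V m) (by linarith : (0:ℝ) ≤ 2*c)) _
  have ha := matOpNorm_pos hd hV
  have hmn := euclNorm_nonneg m
  nlinarith [h2, ha, hmn, euclNorm_nonneg μ]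

lemma exponent_le (hd : 0 < d) (hV : V.PosDef) {c : ℝ} (hc : 0 < c)
    (hca : 4 * c * matOpNorm V ≤ 1) (μ x : Fin d → ℝ) :
    c * euclNorm x ^ 2 + -((x - μ) ⬝ᵥ (V⁻¹ *ᵥ (x - μ))) / 2 ≤
      2 * c * euclNorm μ ^ 2 - euclNorm (x - mCtr V c μ) ^ 2 / (4 * matOpNorm V) := by
  have ha : 0 < matOpNorm V := matOpNorm_pos hd hV
  set a := matOpNorm V with haa
  set m := mCtr V c μ with hmm
  have hspec : m - (2*c) • (V *ᵥ m) = μ := mCtr_spec hV hc hca μ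
  set z := x - m with hzz
  have hBh : (V⁻¹).IsHermitian := hV.1.inv
  have hBVm : V⁻¹ *ᵥ (V *ᵥ m) = m := by
    rw [Matrix.mulVec_mulVec, Matrix.nonsing_inv_mul _ hV.det_pos.ne'.isUnit,
      Matrix.one_mulVec]
  have hy : x - μ = z + (2*c) • (V *ᵥ m) := by rw [hzz, ← hspec]; abel
  have hx : x = z + m := by rw [hzz]; abel
  have e1 : x ⬝ᵥ x = z ⬝ᵥ z + 2*(z ⬝ᵥ m) + m ⬝ᵥ m := by
    conv_lhs => rw [hx]
    rw [add_dotProduct, dotProduct_add, dotProduct_add,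
      dotProduct_comm m z]
    ring
  have e2 : (x - μ) ⬝ᵥ (V⁻¹ *ᵥ (x - μ)) =
      z ⬝ᵥ (V⁻¹ *ᵥ z) + 4*c*(z ⬝ᵥ m) + 4*c^2*(m ⬝ᵥ (V *ᵥ m)) := by
    rw [hy, Matrix.mulVec_add, Matrix.mulVec_smul, hBVm]
    rw [add_dotProduct, dotProduct_add, dotProduct_add]
    have t1 : ((2*c) • (V *ᵥ m)) ⬝ᵥ (V⁻¹ *ᵥ z) = 2*c*(z ⬝ᵥ m) := by
      rw [smul_dotProduct, smul_eq_mul, dot_symm hBh (V *ᵥ m) z, hBVm]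
    have t2 : z ⬝ᵥ ((2*c) • m) = 2*c*(z ⬝ᵥ m) := by
      rw [dotProduct_smul, smul_eq_mul]
    have t3 : ((2*c) • (V *ᵥ m)) ⬝ᵥ ((2*c) • m) = 4*c^2*(m ⬝ᵥ (V *ᵥ m)) := by
      rw [smul_dotProduct, dotProduct_smul, smul_eq_mul, smul_eq_mul,
        dotProduct_comm]
      ring
    rw [t1, t2, t3]; ring
  have e3 : m ⬝ᵥ μ = m ⬝ᵥ m - 2*c*(m ⬝ᵥ (V *ᵥ m)) := by
    rw [← hspec, dotProduct_sub, dotProduct_smul, smul_eq_mul]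
  have b1 : c * (m ⬝ᵥ μ) ≤ 2*c*euclNorm μ ^ 2 := by
    have h1 : m ⬝ᵥ μ ≤ euclNorm m * euclNorm μ := dot_le_euclNorm m μ
    have h2 : euclNorm m ≤ 2 * euclNorm μ := mCtr_norm_le hd hV hc hca μ
    have h3 : euclNorm m * euclNorm μ ≤ 2 * euclNorm μ ^ 2 := by
      nlinarith [euclNorm_nonneg μ, h2]
    nlinarith [h1, h3, hc]
  have b2 : euclNorm z ^ 2 ≤ a * (z ⬝ᵥ (V⁻¹ *ᵥ z)) := inv_form_ge hV z
  have hzsq : z ⬝ᵥ z = euclNorm z ^ 2 := (euclNorm_sq z).symm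
  have hxsq : euclNorm x ^ 2 = x ⬝ᵥ x := euclNorm_sq x
  have hn2 : 0 ≤ euclNorm z ^ 2 := sq_nonneg _
  have key2 : euclNorm z ^ 2 / (4*a) ≤ (z ⬝ᵥ (V⁻¹ *ᵥ z))/2 - c * euclNorm z ^ 2 := by
    rw [div_le_iff₀ (by positivity : (0:ℝ) < 4*a)]
    nlinarith [b2, mul_nonneg (sub_nonneg.2 hca) hn2, hn2, ha]
  rw [hxsq, e1, e2, hzsq]
  have final := add_le_add b1 key2
  nlinarith [final]

end center

theorem stmt1 (d : ℕ) (hd : 0 < d) (μ : Fin d → ℝ) (V : Matrix (Fin d) (Fin d) ℝ)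
    (hV : V.PosDef) (c : ℝ) (hc : 0 < c) (hc' : c ≤ 1 / (4 * matOpNorm V)) :
    ∫ x : Fin d → ℝ, Real.exp (c * euclNorm x ^ 2) * gaussDensity μ V x ≤
      (2 * matOpNorm V) ^ ((d : ℝ) / 2) * V.det ^ (-(1 : ℝ) / 2) *
        Real.exp (2 * c * euclNorm μ ^ 2) := by
  have ha : 0 < matOpNorm V := matOpNorm_pos hd hV
  set a := matOpNorm V with haa
  have hca : 4 * c * a ≤ 1 := by
    rw [le_div_iff₀ (by positivity)] at hc'
    linarith
  have hdet : 0 < V.det := hV.det_pos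
  have hC0 : 0 < ((2 * Real.pi) ^ d * V.det) ^ (-(1 : ℝ) / 2) := by
    have h2pi : (0:ℝ) < (2 * Real.pi) ^ d * V.det := by positivity
    positivity
  set C0 : ℝ := ((2 * Real.pi) ^ d * V.det) ^ (-(1 : ℝ) / 2) with hC0def
  set m := mCtr V c μ with hmdef
  set K : ℝ := C0 * Real.exp (2 * c * euclNorm μ ^ 2) with hKdef
  set g : (Fin d → ℝ) → ℝ :=
    fun x => K * ∏ i, Real.exp (-(1/(4*a)) * (x i - m i) ^ 2) with hgdef
  have hsum : ∀ y : Fin d → ℝ,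
      -(euclNorm y ^ 2 / (4*a)) = ∑ i, -(1/(4*a)) * (y i) ^ 2 := by
    intro y
    rw [← Finset.mul_sum, ← euclNorm_sq']
    ring
  have h1d : Integrable (fun t : ℝ => Real.exp (-(1/(4*a)) * t ^ 2)) :=
    integrable_exp_neg_mul_sq (by positivity)
  have hgint : Integrable g := by
    apply Integrable.const_mul
    exact Integrable.fintype_prod (fun i => h1d.comp_sub_right (m i))
  have hbound : ∀ x : Fin d → ℝ,
      Real.exp (c * euclNorm x ^ 2) * gaussDensity μ V x ≤ g x := by
    intro x
    rw [gaussDensity, ← hC0def, ← mul_assoc, mul_comm (Real.exp _) C0, mul_assoc,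
      ← Real.exp_add]
    simp only [hgdef]
    have hprod : ∏ i, Real.exp (-(1/(4*a)) * (x i - m i) ^ 2) =
        Real.exp (-(euclNorm (x - m) ^ 2 / (4*a))) := by
      rw [← Real.exp_sum, hsum (x - m)]
      simp [Pi.sub_apply]
    rw [hprod, hKdef, mul_assoc, ← Real.exp_add]
    apply mul_le_mul_of_nonneg_left _ (le_of_lt hC0)
    rw [Real.exp_le_exp]
    have := exponent_le hd hV hc hca μ x
    rw [← hmdef, ← haa] at this
    linarith
  have hnonneg : ∀ x : Fin d → ℝ,
      0 ≤ Real.exp (c * euclNorm x ^ 2) * gaussDensity μ V x := by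
    intro x
    apply mul_nonneg (Real.exp_nonneg _)
    rw [gaussDensity]
    exact mul_nonneg (le_of_lt hC0) (Real.exp_nonneg _)
  have hle : ∫ x : Fin d → ℝ, Real.exp (c * euclNorm x ^ 2) * gaussDensity μ V x ≤ ∫ x, g x :=
    integral_mono_of_nonneg (Filter.Eventually.of_forall hnonneg) hgint
      (Filter.Eventually.of_forall hbound)
  have hgval : ∫ x, g x = K * (Real.sqrt (Real.pi / (1/(4*a)))) ^ d := by
    simp only [hgdef]
    rw [MeasureTheory.integral_const_mul]
    congr 1
    rw [integral_fintype_prod_volume_eq_prod (f := fun (i : Fin d) (t : ℝ) =>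
      Real.exp (-(1/(4*a)) * (t - m i) ^ 2))]
    have h1 : ∀ i : Fin d, (∫ t : ℝ, Real.exp (-(1/(4*a)) * (t - m i) ^ 2))
        = Real.sqrt (Real.pi / (1/(4*a))) := by
      intro i
      rw [integral_sub_right_eq_self (fun t : ℝ => Real.exp (-(1/(4*a)) * t ^ 2)) (m i)]
      exact integral_gaussian _
    simp only [h1]
    rw [Finset.prod_const]
    simp
  have hπ := Real.pi_pos
  have h4 : Real.pi / (1/(4*a)) = 4*a*Real.pi := by
    field_simp
  have key : C0 * (Real.sqrt (4*a*Real.pi)) ^ d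
      = (2*a) ^ ((d:ℝ)/2) * V.det ^ (-(1:ℝ)/2) := by
    rw [hC0def, Real.sqrt_eq_rpow]
    rw [← Real.rpow_natCast ((4*a*Real.pi) ^ ((1:ℝ)/2)) d, ← Real.rpow_mul (by positivity)]
    rw [Real.mul_rpow (by positivity) (le_of_lt hdet)]
    rw [← Real.rpow_natCast (2*Real.pi) d, ← Real.rpow_mul (by positivity)]
    rw [show (d:ℝ) * (-(1:ℝ)/2) = -((d:ℝ)/2) by ring,
      show (1:ℝ)/2 * (d:ℝ) = (d:ℝ)/2 by ring]
    rw [Real.rpow_neg (by positivity), ← Real.inv_rpow (by positivity)]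
    rw [mul_right_comm, ← Real.mul_rpow (by positivity) (by positivity)]
    congr 2
    field_simp
    ring
  rw [hgval, h4] at hle
  refine hle.trans_eq ?_
  rw [hKdef]
  calc C0 * Real.exp (2 * c * euclNorm μ ^ 2) * Real.sqrt (4*a*Real.pi) ^ d
      = (C0 * Real.sqrt (4*a*Real.pi) ^ d) * Real.exp (2 * c * euclNorm μ ^ 2) := by ring
    _ = (2*a) ^ ((d:ℝ)/2) * V.det ^ (-(1:ℝ)/2) * Real.exp (2 * c * euclNorm μ ^ 2) := by
        rw [key]
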